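/- Let A, B be real symmetric n×n matrices with ‖A‖ ≤ 2.5 (operator norm). For η > 0 let Γ be the counterclockwise rectangular contour with vertices ±3 ± iη/2. Then the GRAMPA similarity matrix X = Σ_{i,j} [η/((λᵢ - μⱼ)² + η²)] vᵢ vᵢᵀ J wⱼ wⱼᵀ admits the resolvent representation X = (1/2π) Re ∮_Γ R_A(z) J R_B(z + iη) dz. -/

import Mathlib

open Matrix Complex intervalIntegral

/-- Counterclockwise contour integral of `f` over the rectangle with vertices
`±3 ± i η/2`. -/
noncomputable def rectIntegral (η : ℝ) (f : ℂ → ℂ) : ℂ :=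
  (∫ t in (-3 : ℝ)..3, f ((t : ℂ) - ((η / 2 : ℝ) : ℂ) * Complex.I))
    + Complex.I * (∫ t in (-(η / 2))..(η / 2), f ((3 : ℂ) + (t : ℂ) * Complex.I))
    - (∫ t in (-3 : ℝ)..3, f ((t : ℂ) + ((η / 2 : ℝ) : ℂ) * Complex.I))
    - Complex.I * (∫ t in (-(η / 2))..(η / 2), f ((-3 : ℂ) + (t : ℂ) * Complex.I))


lemma my_log_neg_im_pos {u : ℂ} (h : 0 < u.im) :
    Complex.log (-u) = Complex.log u - Real.pi * I := by
  apply Complex.ext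
  · simp [Complex.log_re]
  · simp [Complex.log_im, Complex.arg_neg_eq_arg_sub_pi_of_im_pos h]

lemma my_log_neg_im_neg {u : ℂ} (h : u.im < 0) :
    Complex.log (-u) = Complex.log u + Real.pi * I := by
  apply Complex.ext
  · simp [Complex.log_re]
  · simp [Complex.log_im, Complex.arg_neg_eq_arg_add_pi_of_im_neg h]

lemma my_integral_inv_lin (a b : ℝ) (c m : ℂ) (hm : m ≠ 0)
    (h : ∀ t ∈ Set.uIcc a b, c + t * m ∈ Complex.slitPlane) :
    ∫ t in a..b, (c + t * m)⁻¹ =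
      m⁻¹ * (Complex.log (c + b * m) - Complex.log (c + a * m)) := by
  have key : ∫ t in a..b, m * (c + t * m)⁻¹ =
      Complex.log (c + b * m) - Complex.log (c + a * m) := by
    apply intervalIntegral.integral_eq_sub_of_hasDerivAt
    · intro t ht
      have h1 : HasDerivAt (fun z : ℂ => Complex.log (c + z * m))
          ((c + t * m)⁻¹ * m) (t : ℂ) := by
        have := (Complex.hasDerivAt_log (h t ht)).comp (t : ℂ)
          (((hasDerivAt_id (t : ℂ)).mul_const m).const_add c)
        simpa [Function.comp_def] using this
      have := h1.comp_ofReal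
      simpa [mul_comm] using this
    · apply ContinuousOn.intervalIntegrable
      apply ContinuousOn.mul continuousOn_const
      apply ContinuousOn.inv₀
      · fun_prop
      · intro t ht
        exact Complex.slitPlane_ne_zero (h t ht)
  calc ∫ t in a..b, (c + t * m)⁻¹ = ∫ t in a..b, m⁻¹ * (m * (c + t * m)⁻¹) := by
        apply intervalIntegral.integral_congr
        intro t _
        field_simp
    _ = m⁻¹ * ∫ t in a..b, m * (c + t * m)⁻¹ := intervalIntegral.integral_const_mul _ _
    _ = _ := by rw [key]

/-- Winding of the rectangle around a real pole `l` with `|l| < 3`. -/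
lemma rect_winding {η : ℝ} (hη : 0 < η) {l : ℝ} (hl1 : -3 < l) (hl2 : l < 3) :
    rectIntegral η (fun z => ((l : ℂ) - z)⁻¹) = -(2 * Real.pi * I) := by
  have hh2 : 0 < η / 2 := by linarith
  have hd : (0:ℝ) < 3 - l := by linarith
  have he : (0:ℝ) < 3 + l := by linarith
  -- bottom
  have hB : (∫ t in (-3:ℝ)..3, ((l : ℂ) - ((t : ℂ) - ((η/2 : ℝ) : ℂ) * I))⁻¹)
      = Complex.log ((3 + l : ℝ) + (η/2 : ℝ) * I)
        - Complex.log (-(((3 - l : ℝ) : ℂ) - (η/2 : ℝ) * I)) := by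
    rw [show (∫ t in (-3:ℝ)..3, ((l : ℂ) - ((t : ℂ) - ((η/2 : ℝ) : ℂ) * I))⁻¹)
        = ∫ t in (-3:ℝ)..3, ((((l:ℂ) + (η/2:ℝ) * I)) + t * (-1))⁻¹ from
      intervalIntegral.integral_congr (fun t _ => by ring_nf)]
    rw [my_integral_inv_lin _ _ _ _ (by norm_num)
      (fun t _ => Or.inr (by simp [hh2.ne']))]
    push_cast
    ring_nf
  -- right
  have hR : (∫ t in (-(η/2))..(η/2), ((l : ℂ) - ((3:ℂ) + (t : ℂ) * I))⁻¹)
      = -(I⁻¹ * (Complex.log (((3 - l : ℝ) : ℂ) + ((η/2 : ℝ) : ℂ) * I)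
          - Complex.log (((3 - l : ℝ) : ℂ) - ((η/2 : ℝ) : ℂ) * I))) := by
    rw [show (∫ t in (-(η/2))..(η/2), ((l : ℂ) - ((3:ℂ) + (t : ℂ) * I))⁻¹)
        = ∫ t in (-(η/2))..(η/2), -(((((3 - l : ℝ)) : ℂ) + t * I)⁻¹) from
      intervalIntegral.integral_congr (fun t _ => by
        rw [show ((l : ℂ) - ((3:ℂ) + (t : ℂ) * I)) = -((((3 - l : ℝ)) : ℂ) + t * I) by
          push_cast; ring, inv_neg])]
    rw [intervalIntegral.integral_neg]
    rw [my_integral_inv_lin _ _ _ _ Complex.I_ne_zero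
      (fun t _ => Or.inl (by simpa using hd))]
    push_cast
    ring_nf
  -- top
  have hT : (∫ t in (-3:ℝ)..3, ((l : ℂ) - ((t : ℂ) + ((η/2 : ℝ) : ℂ) * I))⁻¹)
      = Complex.log (((3 + l : ℝ) : ℂ) - ((η/2 : ℝ) : ℂ) * I)
        - Complex.log (-((((3 - l : ℝ)) : ℂ) + ((η/2 : ℝ) : ℂ) * I)) := by
    rw [show (∫ t in (-3:ℝ)..3, ((l : ℂ) - ((t : ℂ) + ((η/2 : ℝ) : ℂ) * I))⁻¹)
        = ∫ t in (-3:ℝ)..3, ((((l:ℂ) - ((η/2:ℝ):ℂ) * I)) + t * (-1))⁻¹ from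
      intervalIntegral.integral_congr (fun t _ => by ring_nf)]
    rw [my_integral_inv_lin _ _ _ _ (by norm_num)
      (fun t _ => Or.inr (by simp [hh2.ne']))]
    push_cast
    ring_nf
  -- left
  have hL : (∫ t in (-(η/2))..(η/2), ((l : ℂ) - ((-3:ℂ) + (t : ℂ) * I))⁻¹)
      = (-I)⁻¹ * (Complex.log (((3 + l : ℝ) : ℂ) - ((η/2 : ℝ) : ℂ) * I)
          - Complex.log (((3 + l : ℝ) : ℂ) + ((η/2 : ℝ) : ℂ) * I)) := by
    rw [show (∫ t in (-(η/2))..(η/2), ((l : ℂ) - ((-3:ℂ) + (t : ℂ) * I))⁻¹)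
        = ∫ t in (-(η/2))..(η/2), (((((3 + l : ℝ)) : ℂ)) + t * (-I))⁻¹ from
      intervalIntegral.integral_congr (fun t _ => by push_cast; ring_nf)]
    rw [my_integral_inv_lin _ _ _ _ (by simpa using Complex.I_ne_zero)
      (fun t _ => Or.inl (by simpa using he))]
    push_cast
    ring_nf
  rw [rectIntegral]
  rw [hB, hR, hT, hL]
  rw [my_log_neg_im_neg (u := (((3 - l : ℝ)) : ℂ) - ((η/2 : ℝ) : ℂ) * I) (by simpa using hh2),
      my_log_neg_im_pos (u := (((3 - l : ℝ)) : ℂ) + ((η/2 : ℝ) : ℂ) * I) (by simpa using hh2)]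
  field_simp
  ring_nf

/-- The rectangle integral of `(p - z)⁻¹` vanishes when `p` is below the rectangle. -/
lemma rect_zero {η : ℝ} (hη : 0 < η) {p : ℂ} (hp : p.im < -(η/2)) :
    rectIntegral η (fun z => (p - z)⁻¹) = 0 := by
  have hle : -(η/2) ≤ η/2 := by linarith
  have h := Complex.integral_boundary_rect_eq_zero_of_differentiableOn
    (fun z => (p - z)⁻¹) (⟨-3, -(η/2)⟩ : ℂ) (⟨3, η/2⟩ : ℂ) ?diff
  case diff =>
    apply DifferentiableOn.inv
    · exact ((differentiable_const p).sub differentiable_id).differentiableOn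
    · rintro x ⟨-, hx2⟩
      intro hzero
      have hxim : x.im = p.im := by
        have : (p - x) = 0 := hzero
        have := congrArg Complex.im this
        simp at this
        linarith
      rw [Set.uIcc_of_le hle] at hx2
      simp only [Set.mem_preimage] at hx2
      have := hx2.1
      rw [hxim] at this
      linarith
  simp only [Complex.ofReal_neg] at h
  rw [rectIntegral]
  rw [show (∫ t in (-3:ℝ)..3, (p - ((t : ℂ) - ((η/2 : ℝ) : ℂ) * I))⁻¹)
      = ∫ x in ((⟨-3, -(η/2)⟩ : ℂ).re)..((⟨3, η/2⟩ : ℂ).re),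
          (p - ((x : ℂ) + ((⟨-3, -(η/2)⟩ : ℂ).im : ℂ) * I))⁻¹ from
    intervalIntegral.integral_congr (fun t _ => by push_cast; ring_nf)]
  rw [show (∫ t in (-3:ℝ)..3, (p - ((t : ℂ) + ((η/2 : ℝ) : ℂ) * I))⁻¹)
      = ∫ x in ((⟨-3, -(η/2)⟩ : ℂ).re)..((⟨3, η/2⟩ : ℂ).re),
          (p - ((x : ℂ) + ((⟨3, η/2⟩ : ℂ).im : ℂ) * I))⁻¹ from
    intervalIntegral.integral_congr (fun t _ => by push_cast; ring_nf)]
  rw [show (∫ t in (-(η/2))..(η/2), (p - ((3:ℂ) + (t : ℂ) * I))⁻¹)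
      = ∫ y in ((⟨-3, -(η/2)⟩ : ℂ).im)..((⟨3, η/2⟩ : ℂ).im),
          (p - (((⟨3, η/2⟩ : ℂ).re : ℂ) + (y : ℂ) * I))⁻¹ from
    intervalIntegral.integral_congr (fun t _ => by push_cast; ring_nf)]
  rw [show (∫ t in (-(η/2))..(η/2), (p - ((-3:ℂ) + (t : ℂ) * I))⁻¹)
      = ∫ y in ((⟨-3, -(η/2)⟩ : ℂ).im)..((⟨3, η/2⟩ : ℂ).im),
          (p - (((⟨-3, -(η/2)⟩ : ℂ).re : ℂ) + (y : ℂ) * I))⁻¹ from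
    intervalIntegral.integral_congr (fun t _ => by push_cast; ring_nf)]
  rw [smul_eq_mul, smul_eq_mul] at h
  push_cast at h ⊢
  linear_combination h

/-- The boundary of the rectangle, as a set. -/
def onRect (η : ℝ) : Set ℂ :=
  ((fun t : ℝ => (t:ℂ) - ((η/2:ℝ):ℂ)*I) '' (Set.uIcc (-3) 3)) ∪
  ((fun t : ℝ => (t:ℂ) + ((η/2:ℝ):ℂ)*I) '' (Set.uIcc (-3) 3)) ∪
  ((fun t : ℝ => (3:ℂ) + (t:ℂ)*I) '' (Set.uIcc (-(η/2)) (η/2))) ∪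
  ((fun t : ℝ => (-3:ℂ) + (t:ℂ)*I) '' (Set.uIcc (-(η/2)) (η/2)))

lemma rectIntegral_congr {η : ℝ} {f g : ℂ → ℂ} (h : Set.EqOn f g (onRect η)) :
    rectIntegral η f = rectIntegral η g := by
  unfold rectIntegral
  rw [intervalIntegral.integral_congr (g := fun t : ℝ => g ((t:ℂ) - ((η/2:ℝ):ℂ)*I))
      (fun t ht => h (Or.inl (Or.inl (Or.inl ⟨t, ht, rfl⟩)))),
    intervalIntegral.integral_congr (g := fun t : ℝ => g ((t:ℂ) + ((η/2:ℝ):ℂ)*I))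
      (fun t ht => h (Or.inl (Or.inl (Or.inr ⟨t, ht, rfl⟩)))),
    intervalIntegral.integral_congr (g := fun t : ℝ => g ((3:ℂ) + (t:ℂ)*I))
      (fun t ht => h (Or.inl (Or.inr ⟨t, ht, rfl⟩))),
    intervalIntegral.integral_congr (g := fun t : ℝ => g ((-3:ℂ) + (t:ℂ)*I))
      (fun t ht => h (Or.inr ⟨t, ht, rfl⟩))]

/-- Integrability of `f` along the four sides of the rectangle. -/
def RectIntegrable (η : ℝ) (f : ℂ → ℂ) : Prop :=
  IntervalIntegrable (fun t : ℝ => f ((t:ℂ) - ((η/2:ℝ):ℂ)*I)) MeasureTheory.volume (-3) 3 ∧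
  IntervalIntegrable (fun t : ℝ => f ((t:ℂ) + ((η/2:ℝ):ℂ)*I)) MeasureTheory.volume (-3) 3 ∧
  IntervalIntegrable (fun t : ℝ => f ((3:ℂ) + (t:ℂ)*I)) MeasureTheory.volume (-(η/2)) (η/2) ∧
  IntervalIntegrable (fun t : ℝ => f ((-3:ℂ) + (t:ℂ)*I)) MeasureTheory.volume (-(η/2)) (η/2)

lemma RectIntegrable.of_continuousOn {η : ℝ} {f : ℂ → ℂ}
    (hf : ContinuousOn f (onRect η)) : RectIntegrable η f := by
  refine ⟨?_, ?_, ?_, ?_⟩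
  · exact ((hf.mono (by intro x hx; exact Or.inl (Or.inl (Or.inl hx)))).comp
      (by fun_prop : Continuous fun t : ℝ => (t:ℂ) - ((η/2:ℝ):ℂ)*I).continuousOn
      (Set.mapsTo_image _ _)).intervalIntegrable
  · exact ((hf.mono (by intro x hx; exact Or.inl (Or.inl (Or.inr hx)))).comp
      (by fun_prop : Continuous fun t : ℝ => (t:ℂ) + ((η/2:ℝ):ℂ)*I).continuousOn
      (Set.mapsTo_image _ _)).intervalIntegrable
  · exact ((hf.mono (by intro x hx; exact Or.inl (Or.inr hx))).comp
      (by fun_prop : Continuous fun t : ℝ => (3:ℂ) + (t:ℂ)*I).continuousOn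
      (Set.mapsTo_image _ _)).intervalIntegrable
  · exact ((hf.mono (by intro x hx; exact Or.inr hx)).comp
      (by fun_prop : Continuous fun t : ℝ => (-3:ℂ) + (t:ℂ)*I).continuousOn
      (Set.mapsTo_image _ _)).intervalIntegrable

lemma rectIntegral_sum {η : ℝ} {ι : Type*} (s : Finset ι) (f : ι → ℂ → ℂ)
    (hf : ∀ i ∈ s, RectIntegrable η (f i)) :
    rectIntegral η (fun z => ∑ i ∈ s, f i z) = ∑ i ∈ s, rectIntegral η (f i) := by
  unfold rectIntegral
  beta_reduce
  rw [intervalIntegral.integral_finset_sum (fun i hi => (hf i hi).1),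
    intervalIntegral.integral_finset_sum (fun i hi => (hf i hi).2.1),
    intervalIntegral.integral_finset_sum (fun i hi => (hf i hi).2.2.1),
    intervalIntegral.integral_finset_sum (fun i hi => (hf i hi).2.2.2)]
  simp only [Finset.sum_sub_distrib, Finset.sum_add_distrib, ← Finset.mul_sum]

lemma rectIntegral_sub {η : ℝ} {f g : ℂ → ℂ} (hf : RectIntegrable η f)
    (hg : RectIntegrable η g) :
    rectIntegral η (fun z => f z - g z) = rectIntegral η f - rectIntegral η g := by
  unfold rectIntegral
  rw [intervalIntegral.integral_sub hf.1 hg.1, intervalIntegral.integral_sub hf.2.1 hg.2.1,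
    intervalIntegral.integral_sub hf.2.2.1 hg.2.2.1,
    intervalIntegral.integral_sub hf.2.2.2 hg.2.2.2]
  ring

lemma rectIntegral_const_mul {η : ℝ} (c : ℂ) (f : ℂ → ℂ) :
    rectIntegral η (fun z => c * f z) = c * rectIntegral η f := by
  unfold rectIntegral
  rw [intervalIntegral.integral_const_mul, intervalIntegral.integral_const_mul,
    intervalIntegral.integral_const_mul, intervalIntegral.integral_const_mul]
  ring

lemma onRect_ne_real {η : ℝ} (hη : 0 < η) {l : ℝ} (hl1 : -3 < l) (hl2 : l < 3)
    {z : ℂ} (hz : z ∈ onRect η) : (l:ℂ) - z ≠ 0 := by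
  intro h0
  have hzz : z = (l:ℂ) := by linear_combination -h0
  subst hzz
  have him : (0:ℝ) < η/2 := by linarith
  rcases hz with ((⟨t, _, ht⟩ | ⟨t, _, ht⟩) | ⟨t, _, ht⟩) | ⟨t, _, ht⟩
  · have := congrArg Complex.im ht; simp at this; linarith
  · have := congrArg Complex.im ht; simp at this; linarith
  · have := congrArg Complex.re ht; simp at this; linarith
  · have := congrArg Complex.re ht; simp at this; linarith

lemma onRect_im_ge {η : ℝ} (hη : 0 < η) {z : ℂ} (hz : z ∈ onRect η) :
    -(η/2) ≤ z.im := by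
  have hle : -(η/2) ≤ η/2 := by linarith
  rcases hz with ((⟨t, _, ht⟩ | ⟨t, _, ht⟩) | ⟨t, ht', ht⟩) | ⟨t, ht', ht⟩
  · have := congrArg Complex.im ht; simp at this; linarith
  · have := congrArg Complex.im ht; simp at this; linarith
  · have := congrArg Complex.im ht; simp at this
    rw [Set.uIcc_of_le hle] at ht'; rw [← this]; exact ht'.1
  · have := congrArg Complex.im ht; simp at this
    rw [Set.uIcc_of_le hle] at ht'; rw [← this]; exact ht'.1

lemma onRect_ne_below {η : ℝ} (hη : 0 < η) {p : ℂ} (hp : p.im < -(η/2))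
    {z : ℂ} (hz : z ∈ onRect η) : p - z ≠ 0 := by
  intro h0
  have : p.im = z.im := by
    have := congrArg Complex.im h0; simp at this; linarith
  have := onRect_im_ge hη hz
  linarith

/-- Key contour integral: product of two resolvent factors. -/
lemma rect_pair {η : ℝ} (hη : 0 < η) {l : ℝ} (hl1 : -3 < l) (hl2 : l < 3)
    {k : ℂ} (hk : k.im < -(η/2)) :
    rectIntegral η (fun z => ((l:ℂ) - z)⁻¹ * (k - z)⁻¹)
      = (k - (l:ℂ))⁻¹ * -(2 * Real.pi * I) := by
  have hkl : k - (l:ℂ) ≠ 0 := by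
    intro h0
    have := congrArg Complex.im h0
    simp at this
    linarith
  have hcongr : Set.EqOn (fun z => ((l:ℂ) - z)⁻¹ * (k - z)⁻¹)
      (fun z => (k - (l:ℂ))⁻¹ * (((l:ℂ) - z)⁻¹ - (k - z)⁻¹)) (onRect η) := by
    intro z hz
    have h1 := onRect_ne_real hη hl1 hl2 hz
    have h2 := onRect_ne_below hη hk hz
    field_simp
    ring
  rw [rectIntegral_congr hcongr, rectIntegral_const_mul,
    rectIntegral_sub (f := fun z => ((l:ℂ) - z)⁻¹) (g := fun z => (k - z)⁻¹)
      (RectIntegrable.of_continuousOn (ContinuousOn.inv₀ (by fun_prop)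
        (fun z hz => onRect_ne_real hη hl1 hl2 hz)))
      (RectIntegrable.of_continuousOn (ContinuousOn.inv₀ (by fun_prop)
        (fun z hz => onRect_ne_below hη hk hz))),
    rect_winding hη hl1 hl2, rect_zero hη hk]
  ring

lemma my_vecMulVec_mul {n : ℕ} (a b c d : Fin n → ℂ) :
    vecMulVec a b * vecMulVec c d = (b ⬝ᵥ c) • vecMulVec a d := by
  ext i j
  simp only [Matrix.mul_apply, Matrix.smul_apply, vecMulVec_apply, dotProduct,
    smul_eq_mul, Finset.sum_mul]
  apply Finset.sum_congr rfl
  intros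
  ring

lemma my_complete {n : ℕ} (v : Fin n → Fin n → ℝ)
    (hv : ∀ i j, v i ⬝ᵥ v j = if i = j then 1 else 0) :
    ∑ i, vecMulVec (fun k => (v i k : ℂ)) (fun k => (v i k : ℂ)) = 1 := by
  set V : Matrix (Fin n) (Fin n) ℂ := Matrix.of fun i k => (v i k : ℂ) with hV
  have h1 : V * Vᵀ = 1 := by
    ext i j
    have := congrArg (Complex.ofReal) (hv i j)
    push_cast [dotProduct] at this
    simp only [Matrix.mul_apply, Matrix.transpose_apply, Matrix.one_apply, hV, Matrix.of_apply]
    rw [this]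
    split <;> simp
  have h2 : Vᵀ * V = 1 := mul_eq_one_comm.mp h1
  ext a c
  have := congrFun (congrFun h2 a) c
  simpa [Matrix.mul_apply, Matrix.sum_apply, vecMulVec_apply, Matrix.transpose_apply, hV,
    mul_comm] using this

lemma my_resolvent {n : ℕ} (u : Fin n → Fin n → ℂ) (c : Fin n → ℂ)
    (hu : ∀ i j, u i ⬝ᵥ u j = if i = j then 1 else 0)
    (hcomp : ∑ i, vecMulVec (u i) (u i) = 1)
    (M : Matrix (Fin n) (Fin n) ℂ) (hM : M = ∑ i, c i • vecMulVec (u i) (u i))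
    (z : ℂ) (hz : ∀ i, c i ≠ z) :
    (M - z • 1)⁻¹ = ∑ i, (c i - z)⁻¹ • vecMulVec (u i) (u i) := by
  have hMz : M - z • 1 = ∑ i, (c i - z) • vecMulVec (u i) (u i) := by
    rw [hM, ← hcomp, Finset.smul_sum, ← Finset.sum_sub_distrib]
    apply Finset.sum_congr rfl
    intros i _
    rw [sub_smul]
  apply Matrix.inv_eq_right_inv
  rw [hMz, Finset.sum_mul]
  have : ∀ i ∈ Finset.univ, ((c i - z) • vecMulVec (u i) (u i)) *
      (∑ j, (c j - z)⁻¹ • vecMulVec (u j) (u j)) = vecMulVec (u i) (u i) := by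
    intro i _
    rw [Finset.mul_sum]
    have hterm : ∀ j, ((c i - z) • vecMulVec (u i) (u i)) * ((c j - z)⁻¹ • vecMulVec (u j) (u j))
        = if j = i then vecMulVec (u i) (u i) else 0 := by
      intro j
      rw [smul_mul_assoc, mul_smul_comm, my_vecMulVec_mul, hu]
      by_cases h : j = i
      · subst h
        simp [smul_smul, mul_inv_cancel₀ (sub_ne_zero.mpr (hz j))]
      · simp [Ne.symm h, h]
    simp [hterm]
  rw [Finset.sum_congr rfl this, hcomp]

lemma my_mulVec_eig {n : ℕ} (A : Matrix (Fin n) (Fin n) ℝ) (lam : Fin n → ℝ)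
    (v : Fin n → Fin n → ℝ)
    (hv : ∀ i j, v i ⬝ᵥ v j = if i = j then 1 else 0)
    (hAdec : A = ∑ i, lam i • Matrix.vecMulVec (v i) (v i)) (i : Fin n) :
    A *ᵥ v i = lam i • v i := by
  funext k
  subst hAdec
  simp only [Matrix.mulVec, dotProduct, Matrix.sum_apply, Matrix.smul_apply,
    vecMulVec_apply, smul_eq_mul, Finset.sum_mul, Pi.smul_apply]
  rw [Finset.sum_comm]
  have : ∀ p, ∑ j, lam p * (v p k * v p j) * v i j = lam p * v p k * (v p ⬝ᵥ v i) := by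
    intro p
    simp only [dotProduct, Finset.mul_sum]
    apply Finset.sum_congr rfl
    intros
    ring
  simp only [this, hv]
  simp [Finset.sum_ite_eq]

lemma my_eig_bound {n : ℕ} (A : Matrix (Fin n) (Fin n) ℝ) (l : ℝ) (u : Fin n → ℝ)
    (hu : u ⬝ᵥ u = 1) (hAu : A *ᵥ u = l • u)
    (hA : ‖Matrix.toEuclideanCLM (𝕜 := ℂ) (A.map Complex.ofReal)‖ ≤ 2.5) :
    |l| ≤ 2.5 := by
  set x : EuclideanSpace ℂ (Fin n) := (WithLp.equiv 2 _).symm (fun k => (u k : ℂ)) with hx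
  have hxnorm : ‖x‖ = 1 := by
    rw [EuclideanSpace.norm_eq]
    have : ∀ k, ‖x k‖ ^ 2 = u k ^ 2 := by
      intro k
      rw [hx]
      simp [WithLp.equiv_symm_apply, Complex.norm_real, sq_abs]
    simp only [this]
    rw [show ∑ k, u k ^ 2 = u ⬝ᵥ u by simp [dotProduct, sq]]
    rw [hu, Real.sqrt_one]
  have hmul : Matrix.toEuclideanCLM (𝕜 := ℂ) (A.map Complex.ofReal) x = (l : ℂ) • x := by
    rw [hx, WithLp.equiv_symm_apply, Matrix.toEuclideanCLM_toLp]
    have : Matrix.toLin' (A.map Complex.ofReal) (fun k => (u k : ℂ))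
        = (l : ℂ) • (fun k => (u k : ℂ)) := by
      rw [Matrix.toLin'_apply]
      funext k
      have := congrFun hAu k
      simp only [Matrix.mulVec, dotProduct, Pi.smul_apply, smul_eq_mul,
        Matrix.map_apply] at this ⊢
      rw [show ∑ j, ((A k j : ℝ) : ℂ) * ((u j : ℝ) : ℂ) = ((∑ j, A k j * u j : ℝ) : ℂ) by
        push_cast; rfl]
      rw [this]
      push_cast
      ring
    rw [← Matrix.toLin'_apply, this]
    simp
  have hnorm1 : ‖Matrix.toEuclideanCLM (𝕜 := ℂ) (A.map Complex.ofReal) x‖ ≤ 2.5 * ‖x‖ :=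
    le_trans ((Matrix.toEuclideanCLM (𝕜 := ℂ) (A.map Complex.ofReal)).le_opNorm x)
      (by gcongr)
  rw [hmul, norm_smul, hxnorm] at hnorm1
  simpa using hnorm1

/-- Resolvent representation of the GRAMPA similarity matrix:
if `‖A‖ ≤ 2.5` then `X = (1/2π) Re ∮_Γ R_A(z) J R_B(z + iη) dz`, where `Γ` is the
rectangle with vertices `±3 ± iη/2`. -/
theorem similarity_matrix_resolvent_rep {n : ℕ} (A B : Matrix (Fin n) (Fin n) ℝ)
    (lam mu : Fin n → ℝ) (v w : Fin n → Fin n → ℝ)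
    (hv : ∀ i j, v i ⬝ᵥ v j = if i = j then 1 else 0)
    (hw : ∀ i j, w i ⬝ᵥ w j = if i = j then 1 else 0)
    (hAdec : A = ∑ i, lam i • Matrix.vecMulVec (v i) (v i))
    (hBdec : B = ∑ j, mu j • Matrix.vecMulVec (w j) (w j))
    (hAnorm : ‖Matrix.toEuclideanCLM (𝕜 := ℂ) (A.map Complex.ofReal)‖ ≤ 2.5)
    (η : ℝ) (hη : 0 < η) (a b : Fin n) :
    ((∑ i, ∑ j, (η / ((lam i - mu j) ^ 2 + η ^ 2)) •
        (Matrix.vecMulVec (v i) (v i) * Matrix.of (fun _ _ => (1 : ℝ)) *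
          Matrix.vecMulVec (w j) (w j)) : Matrix (Fin n) (Fin n) ℝ)) a b
      = (1 / (2 * Real.pi)) *
          (rectIntegral η (fun z =>
            ((((A.map Complex.ofReal) - z • 1)⁻¹ * Matrix.of (fun _ _ => (1 : ℂ)) *
              ((B.map Complex.ofReal) - (z + (η : ℂ) * Complex.I) • 1)⁻¹ :
                Matrix (Fin n) (Fin n) ℂ)) a b)).re := by
  -- abbreviations
  set Am := A.map Complex.ofReal with hAm'
  set Bm := B.map Complex.ofReal with hBm'
  set vC : Fin n → Fin n → ℂ := fun i k => (v i k : ℂ) with hvC'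
  set wC : Fin n → Fin n → ℂ := fun j k => (w j k : ℂ) with hwC'
  set Jc : Matrix (Fin n) (Fin n) ℂ := Matrix.of (fun _ _ => (1 : ℂ)) with hJc'
  set K : Fin n → ℂ := fun j => (mu j : ℂ) - (η : ℂ) * I with hK'
  -- eigenvalue bounds
  have hl : ∀ i, |lam i| ≤ 2.5 := fun i =>
    my_eig_bound A (lam i) (v i) (by simpa using hv i i)
      (my_mulVec_eig A lam v hv hAdec i) hAnorm
  have hl1 : ∀ i, -3 < lam i := fun i => by have := (abs_le.mp (hl i)).1; linarith
  have hl2 : ∀ i, lam i < 3 := fun i => by have := (abs_le.mp (hl i)).2; linarith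
  have hKim : ∀ j, (K j).im < -(η/2) := fun j => by
    simp [hK']; linarith
  -- complex orthonormality
  have hvCo : ∀ i j, vC i ⬝ᵥ vC j = if i = j then 1 else 0 := by
    intro i j
    have := congrArg (Complex.ofReal) (hv i j)
    push_cast [dotProduct] at this
    simpa [dotProduct, hvC', apply_ite Complex.ofReal] using this
  have hwCo : ∀ i j, wC i ⬝ᵥ wC j = if i = j then 1 else 0 := by
    intro i j
    have := congrArg (Complex.ofReal) (hw i j)
    push_cast [dotProduct] at this
    simpa [dotProduct, hwC', apply_ite Complex.ofReal] using this
  -- complex spectral decompositions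
  have hAmdec : Am = ∑ i, ((lam i : ℂ)) • vecMulVec (vC i) (vC i) := by
    ext p q
    rw [hAm', Matrix.map_apply, hAdec]
    simp [Matrix.sum_apply, vecMulVec_apply, hvC']
  have hBmdec : Bm = ∑ j, ((mu j : ℂ)) • vecMulVec (wC j) (wC j) := by
    ext p q
    rw [hBm', Matrix.map_apply, hBdec]
    simp [Matrix.sum_apply, vecMulVec_apply, hwC']
  -- the coefficient matrices
  set c : Fin n × Fin n → ℂ := fun p =>
    (vecMulVec (vC p.1) (vC p.1) * Jc * vecMulVec (wC p.2) (wC p.2)) a b with hc'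
  -- pointwise identity on the contour
  have key : Set.EqOn
      (fun z => ((Am - z • 1)⁻¹ * Jc * (Bm - (z + (η : ℂ) * I) • 1)⁻¹) a b)
      (fun z => ∑ p : Fin n × Fin n,
        c p * (((lam p.1 : ℂ) - z)⁻¹ * (K p.2 - z)⁻¹)) (onRect η) := by
    intro z hz
    have hzA : ∀ i, (lam i : ℂ) ≠ z := fun i =>
      sub_ne_zero.mp (onRect_ne_real hη (hl1 i) (hl2 i) hz)
    have hzB : ∀ j, (mu j : ℂ) ≠ z + (η : ℂ) * I := by
      intro j h0
      have := onRect_ne_below hη (hKim j) hz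
      apply this
      rw [hK']
      linear_combination h0
    have hA' := my_resolvent vC (fun i => (lam i : ℂ)) hvCo (my_complete v hv) Am hAmdec z hzA
    have hB' := my_resolvent wC (fun j => (mu j : ℂ)) hwCo (my_complete w hw) Bm hBmdec
      (z + (η : ℂ) * I) hzB
    simp only
    rw [hA', hB']
    rw [Finset.sum_mul]
    rw [Finset.sum_mul]
    rw [Matrix.sum_apply]
    rw [Fintype.sum_prod_type]
    apply Finset.sum_congr rfl
    intro i _
    rw [Finset.mul_sum, Matrix.sum_apply]
    apply Finset.sum_congr rfl
    intro j _
    rw [smul_mul_assoc, smul_mul_assoc, mul_smul_comm, smul_smul, Matrix.smul_apply]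
    rw [show (mu j : ℂ) - (z + (η:ℂ) * I) = K j - z by rw [hK']; ring]
    rw [smul_eq_mul]
    ring
  -- compute the rectangle integral
  have hint : rectIntegral η (fun z =>
      ((Am - z • 1)⁻¹ * Jc * (Bm - (z + (η : ℂ) * I) • 1)⁻¹) a b)
      = ∑ p : Fin n × Fin n, c p * ((K p.2 - (lam p.1 : ℂ))⁻¹ * -(2 * Real.pi * I)) := by
    rw [rectIntegral_congr key]
    rw [rectIntegral_sum Finset.univ
      (fun p z => c p * (((lam p.1 : ℂ) - z)⁻¹ * (K p.2 - z)⁻¹))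
      (fun p _ => RectIntegrable.of_continuousOn
        (continuousOn_const.mul
          ((ContinuousOn.inv₀ (by fun_prop)
            (fun z hz => onRect_ne_real hη (hl1 p.1) (hl2 p.1) hz)).mul
           (ContinuousOn.inv₀ (by fun_prop)
            (fun z hz => onRect_ne_below hη (hKim p.2) hz)))))]
    apply Finset.sum_congr rfl
    intro p _
    rw [rectIntegral_const_mul (c p)
      (fun z => ((lam p.1 : ℂ) - z)⁻¹ * (K p.2 - z)⁻¹)]
    rw [rect_pair hη (hl1 p.1) (hl2 p.1) (hKim p.2)]
  rw [hint, Complex.re_sum]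
  have hcr : ∀ p : Fin n × Fin n, c p =
      (((vecMulVec (v p.1) (v p.1) * (Matrix.of (fun _ _ => (1:ℝ)) : Matrix (Fin n) (Fin n) ℝ) *
        vecMulVec (w p.2) (w p.2)) a b : ℝ) : ℂ) := by
    intro p
    simp only [hc', Matrix.mul_apply, vecMulVec_apply, hvC', hwC', hJc', Matrix.of_apply]
    push_cast
    rfl
  have hre : ∀ p : Fin n × Fin n,
      (c p * ((K p.2 - (lam p.1 : ℂ))⁻¹ * -(2 * Real.pi * I))).re
      = ((vecMulVec (v p.1) (v p.1) * (Matrix.of (fun _ _ => (1:ℝ)) : Matrix (Fin n) (Fin n) ℝ) *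
          vecMulVec (w p.2) (w p.2)) a b) *
        (2 * Real.pi * η / ((lam p.1 - mu p.2)^2 + η^2)) := by
    intro p
    rw [hcr p]
    set x : ℝ := mu p.2 - lam p.1 with hx
    set D : ℝ := x^2 + η^2 with hD
    have hD0 : D ≠ 0 := by positivity
    have hu : K p.2 - (lam p.1 : ℂ) = (x : ℂ) - (η : ℂ) * I := by
      rw [hK', hx]; push_cast; ring
    have hinv : ((x : ℂ) - (η : ℂ) * I)⁻¹ = ((x : ℂ) + (η : ℂ) * I) * (((D : ℝ) : ℂ))⁻¹ := by
      have h3 : ((x : ℂ) - (η : ℂ) * I) * ((x : ℂ) + (η : ℂ) * I) = ((D : ℝ) : ℂ) := by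
        rw [hD]
        push_cast
        ring_nf
        rw [Complex.I_sq]
        ring
      have h2 : ((x : ℂ) - (η : ℂ) * I) * (((x : ℂ) + (η : ℂ) * I) * (((D : ℝ) : ℂ))⁻¹) = 1 := by
        rw [← mul_assoc, h3, mul_inv_cancel₀ (by exact_mod_cast hD0)]
      exact inv_eq_of_mul_eq_one_right h2
    rw [hu, hinv]
    rw [show ((lam p.1 - mu p.2)^2 + η^2 : ℝ) = D by rw [hD, hx]; ring]
    rw [← Complex.ofReal_inv]
    simp only [Complex.mul_re, Complex.mul_im, Complex.add_re, Complex.add_im,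
      Complex.ofReal_re, Complex.ofReal_im, Complex.I_re, Complex.I_im,
      Complex.neg_re, Complex.neg_im, Complex.re_ofNat, Complex.im_ofNat]
    field_simp
    ring
  rw [show (∑ p : Fin n × Fin n, (c p * ((K p.2 - (lam p.1 : ℂ))⁻¹ * -(2 * Real.pi * I))).re)
      = ∑ p : Fin n × Fin n, ((vecMulVec (v p.1) (v p.1) * (Matrix.of (fun _ _ => (1:ℝ)) : Matrix (Fin n) (Fin n) ℝ) *
          vecMulVec (w p.2) (w p.2)) a b) *
        (2 * Real.pi * η / ((lam p.1 - mu p.2)^2 + η^2)) from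
    Finset.sum_congr rfl (fun p _ => hre p)]
  rw [Finset.mul_sum]
  rw [Matrix.sum_apply]
  rw [Fintype.sum_prod_type]
  apply Finset.sum_congr rfl
  intro i _
  rw [Matrix.sum_apply]
  apply Finset.sum_congr rfl
  intro j _
  rw [Matrix.smul_apply, smul_eq_mul]
  have hd : ((lam i - mu j)^2 + η^2 : ℝ) ≠ 0 := by positivity
  have hpi : Real.pi ≠ 0 := Real.pi_ne_zero
  rw [show ((lam i - mu j)^2 : ℝ) = (mu j - lam i)^2 by ring] at hd ⊢
  field_simp
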